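/- Let M ≥ 2, λ ∈ ℂ with Im(λ) > 0 and Re(λ) ∈ [−E,E] for some 0 < E < 2√M, and let z_λ ∈ ℍ be the unique fixed point in the upper half plane of z ↦ −1/(Mz+λ). For z₁,…,z_M in the upper half plane not all equal to z_λ, define μ₂ = M·w(φ(z₁,…,z_M))/(w(z₁)+⋯+w(z_M)) with w(z) = |z−z_λ|²/(Im(z)·Im(z_λ)) and φ(z₁,…,z_M) = −1/(z₁+⋯+z_M+λ). Then μ₂ < 1. -/

import Mathlib

set_option maxHeartbeats 1000000


theorem stmt10 (M : ℕ) (hM : 2 ≤ M) (E : ℝ) (hE0 : 0 < E)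
    (hE : E < 2 * Real.sqrt M)
    (lam : ℂ) (hlam : 0 < lam.im) (hre : lam.re ∈ Set.Icc (-E) E)
    (zlam : ℂ) (hzlam : 0 < zlam.im)
    (hfix : zlam = -1 / ((M : ℂ) * zlam + lam))
    (z : Fin M → ℂ) (hz : ∀ i, 0 < (z i).im)
    (hne : ¬ ∀ i, z i = zlam) :
    let w : ℂ → ℝ := fun u => ‖u - zlam‖ ^ 2 / (u.im * zlam.im)
    (M : ℝ) * w (-1 / (∑ i, z i + lam)) / (∑ i, w (z i)) < 1 := by
  intro w
  have hM' : (2:ℝ) ≤ (M:ℝ) := by exact_mod_cast hM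
  have hM0 : (0:ℝ) < (M:ℝ) := by linarith
  set S : ℂ := ∑ i, z i with hS
  set a : ℝ := lam.im with ha'
  set b : ℝ := zlam.im with hb'
  have ha : 0 < a := hlam
  have hb : 0 < b := hzlam
  set T : ℝ := ∑ i, (z i).im with hT
  have hTpos : 0 < T := by
    apply Finset.sum_pos (fun i _ => hz i)
    exact Finset.univ_nonempty_iff.mpr ⟨⟨0, by omega⟩⟩
  have hSim : S.im = T := by rw [hS, hT, Complex.im_sum]
  set q : ℂ := S + lam with hq'
  set p : ℂ := (M:ℂ) * zlam + lam with hp'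
  have hqim : q.im = T + a := by rw [hq', Complex.add_im, hSim]
  have hpim : p.im = (M:ℝ) * b + a := by
    rw [hp', Complex.add_im, Complex.mul_im]
    simp
    rfl
  have hqi : 0 < q.im := by rw [hqim]; positivity
  have hpi : 0 < p.im := by rw [hpim]; positivity
  have hq0 : q ≠ 0 := fun h => by simp [h] at hqi
  have hp0 : p ≠ 0 := fun h => by simp [h] at hpi
  have hnsq : 0 < Complex.normSq q := Complex.normSq_pos.mpr hq0
  have hnsp : 0 < Complex.normSq p := Complex.normSq_pos.mpr hp0
  -- the difference
  have hzp : zlam * p = -1 := by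
    rw [hfix]
    field_simp
  have hphiz : -1/q - zlam = (S - (M:ℂ)*zlam)/(q*p) := by
    have hq1 : (-1/q) * q = -1 := by field_simp
    have key : (-1/q - zlam) * (q*p) = S - (M:ℂ)*zlam := by
      calc (-1/q - zlam) * (q*p) = ((-1/q)*q)*p - (zlam*p)*q := by ring
        _ = (-1)*p - (-1)*q := by rw [hq1, hzp]
        _ = S - (M:ℂ)*zlam := by rw [hq', hp']; ring
    rw [← key, mul_div_cancel_right₀ _ (mul_ne_zero hq0 hp0)]
  have h2 : (-1/q).im = q.im / Complex.normSq q := by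
    rw [neg_div, Complex.neg_im, one_div, Complex.inv_im]
    ring
  have h3 : b = p.im / Complex.normSq p := by
    rw [hb']
    conv_lhs => rw [hfix]
    rw [neg_div, Complex.neg_im, one_div, Complex.inv_im]
    ring
  set X : ℝ := ‖S - (M:ℂ)*zlam‖ ^ 2 with hX'
  have hX0 : 0 ≤ X := by positivity
  have wphi : w (-1/q) = X / (q.im * p.im) := by
    show ‖(-1/q) - zlam‖ ^ 2 / ((-1/q).im * b) = X / (q.im * p.im)
    rw [hphiz, h2, h3, norm_div, norm_mul, div_pow, mul_pow,
      Complex.sq_norm q, Complex.sq_norm p, ← hX']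
    field_simp
  set A : ℝ := ∑ i, ‖z i - zlam‖ ^ 2 / (z i).im with hA'
  have hsum : (∑ i, w (z i)) = A / b := by
    rw [hA', Finset.sum_div]
    apply Finset.sum_congr rfl
    intro i _
    show ‖z i - zlam‖ ^ 2 / ((z i).im * b) = _
    rw [div_div]
  have hA : 0 < A := by
    obtain ⟨i0, hi0⟩ := not_forall.mp hne
    have hzi0 : z i0 - zlam ≠ 0 := sub_ne_zero.mpr hi0
    apply Finset.sum_pos' (fun i _ => div_nonneg (by positivity) (hz i).le)
    exact ⟨i0, Finset.mem_univ i0,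
      div_pos (pow_pos (norm_pos_iff.mpr hzi0) 2) (hz i0)⟩
  -- Cauchy-Schwarz
  have hSsub : S - (M:ℂ)*zlam = ∑ i, (z i - zlam) := by
    rw [Finset.sum_sub_distrib, Finset.sum_const, Finset.card_univ,
      Fintype.card_fin, nsmul_eq_mul, hS]
  have hCS : X ≤ A * T := by
    have h1 : ‖S - (M:ℂ)*zlam‖ ≤ ∑ i, ‖z i - zlam‖ := by
      rw [hSsub]
      exact norm_sum_le _ _
    have h2' : (∑ i, ‖z i - zlam‖) ^ 2 ≤ A * T := by
      have hsed := Finset.sq_sum_div_le_sum_sq_div Finset.univ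
        (fun i => ‖z i - zlam‖) (g := fun i => (z i).im)
        (fun i _ => hz i)
      rw [← hT, ← hA'] at hsed
      calc (∑ i, ‖z i - zlam‖) ^ 2
          = ((∑ i, ‖z i - zlam‖) ^ 2 / T) * T := by
            field_simp
        _ ≤ A * T := mul_le_mul_of_nonneg_right hsed hTpos.le
    calc X = ‖S - (M:ℂ)*zlam‖ ^ 2 := hX'
      _ ≤ (∑ i, ‖z i - zlam‖) ^ 2 := by
          exact pow_le_pow_left₀ (by positivity) h1 2
      _ ≤ A * T := h2'
  -- final arithmetic
  have hAb : (0:ℝ) < A / b := div_pos hA hb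
  have hden : (0:ℝ) < (T + a) * ((M:ℝ) * b + a) := by positivity
  rw [wphi, hsum, div_lt_one hAb, hqim, hpim,
    ← mul_div_assoc, div_lt_div_iff₀ hden hb]
  have h5 : (M:ℝ) * X * b ≤ (M:ℝ) * (A * T) * b :=
    mul_le_mul_of_nonneg_right (mul_le_mul_of_nonneg_left hCS hM0.le) hb.le
  nlinarith [mul_pos (mul_pos hA hTpos) ha, mul_pos hA (mul_pos ha ha),
    mul_nonneg (mul_nonneg (mul_nonneg hM0.le hA.le) ha.le) hb.le]
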